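/- A pair (s,C) lies in the least fixed point WinM := ⋃_i WinM_i of the iteration WinM₀ := Base, WinM_{i+1} := WinM_i ∪ PreMC(WinM_i) if and only if there exists a (history-based) strategy g : List X → Y such that every infinite input sequence ξ : ℕ → X induces a play starting at s that reaches, after finitely many steps, a state s' with (s',C) ∈ Base. -/
import Mathlib

def PreMC {S Φ X Y : Type*} (δ : S → Y → X → S) (E : Set (S × Set Φ)) :
    Set (S × Set Φ) :=
  {p | ∃ y : Y, ∀ x : X, (δ p.1 y x, p.2) ∈ E}

def WinM {S Φ X Y : Type*} (δ : S → Y → X → S) (Base : Set (S × Set Φ)) :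
    ℕ → Set (S × Set Φ)
  | 0 => Base
  | i + 1 => WinM δ Base i ∪ PreMC δ (WinM δ Base i)

def play {S X Y : Type*} (δ : S → Y → X → S) (g : List X → Y) (ξ : ℕ → X)
    (s : S) : ℕ → S
  | 0 => s
  | t + 1 => δ (play δ g ξ s t) (g ((List.range t).map ξ)) (ξ t)

lemma winM_mono {S Φ X Y : Type*} (δ : S → Y → X → S) (Base : Set (S × Set Φ)) :
    Monotone (WinM δ Base) := by
  apply monotone_nat_of_le_succ
  intro n
  exact Set.subset_union_left

lemma winM_forward {S Φ X Y : Type*} [Nonempty Y] (δ : S → Y → X → S)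
    (Base : Set (S × Set Φ)) :
    ∀ i (s : S) (C : Set Φ), (s, C) ∈ WinM δ Base i →
      ∃ g : List X → Y, ∀ ξ : ℕ → X, ∃ k, (play δ g ξ s k, C) ∈ Base := by
  intro i
  induction i with
  | zero => exact fun s C h => ⟨fun _ => Classical.arbitrary Y, fun ξ => ⟨0, h⟩⟩
  | succ i ih =>
    intro s C h
    rcases h with h | ⟨y, hy⟩
    · exact ih s C h
    · choose gx hgx using fun x => ih (δ s y x) C (hy x)
      set g : List X → Y := fun l => match l with | [] => y | x :: l => gx x l with hg
      refine ⟨g, fun ξ => ?_⟩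
      obtain ⟨k, hk⟩ := hgx (ξ 0) (fun n => ξ (n + 1))
      refine ⟨k + 1, ?_⟩
      have key : ∀ t, play δ g ξ s (t + 1)
          = play δ (gx (ξ 0)) (fun n => ξ (n + 1)) (δ s y (ξ 0)) t := by
        intro t
        induction t with
        | zero => simp [play, hg]
        | succ t iht =>
          have hr : (List.range (t + 1)).map ξ
              = ξ 0 :: (List.range t).map (fun n => ξ (n + 1)) := by
            rw [List.range_succ_eq_map, List.map_cons, List.map_map]
            rfl
          calc play δ g ξ s (t + 1 + 1)
              = δ (play δ g ξ s (t + 1)) (g ((List.range (t + 1)).map ξ)) (ξ (t + 1)) := rfl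
            _ = δ (play δ (gx (ξ 0)) (fun n => ξ (n + 1)) (δ s y (ξ 0)) t)
                  (g (ξ 0 :: (List.range t).map (fun n => ξ (n + 1)))) (ξ (t + 1)) := by
                rw [iht, hr]
            _ = play δ (gx (ξ 0)) (fun n => ξ (n + 1)) (δ s y (ξ 0)) (t + 1) := rfl
      rw [key k]; exact hk

lemma winM_pre {S Φ X Y : Type*} [Fintype X] (δ : S → Y → X → S)
    (Base : Set (S × Set Φ)) :
    PreMC δ (⋃ i, WinM δ Base i) ⊆ ⋃ i, WinM δ Base i := by
  rintro ⟨s, C⟩ ⟨y, hy⟩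
  choose ix hix using fun x => Set.mem_iUnion.mp (hy x)
  refine Set.mem_iUnion.mpr ⟨Finset.univ.sup ix + 1, Or.inr ⟨y, fun x => ?_⟩⟩
  exact winM_mono δ Base (Finset.le_sup (Finset.mem_univ x)) (hix x)

theorem winM_iff_strategy
    {S Φ X Y : Type*} [Fintype S] [Fintype Φ] [Fintype X] [Fintype Y] [Nonempty Y]
    (δ : S → Y → X → S) (Base : Set (S × Set Φ)) (s : S) (C : Set Φ) :
    (s, C) ∈ ⋃ i, WinM δ Base i ↔
      ∃ g : List X → Y, ∀ ξ : ℕ → X, ∃ k : ℕ, (play δ g ξ s k, C) ∈ Base := by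
  classical
  constructor
  · intro h
    obtain ⟨i, hi⟩ := Set.mem_iUnion.mp h
    exact winM_forward δ Base i s C hi
  · rintro ⟨g, hgood⟩
    by_contra hU
    set U := ⋃ i, WinM δ Base i with hUdef
    haveI : Nonempty X := by
      by_contra hne
      rw [not_nonempty_iff] at hne
      exact hU (Set.mem_iUnion.mpr
        ⟨1, Or.inr ⟨Classical.arbitrary Y, fun x => (hne.false x).elim⟩⟩)
    -- bad input choice
    have hbad : ∀ (s' : S) (l : List X),
        ∃ x, ((s', C) ∉ U → (δ s' (g l) x, C) ∉ U) := by
      intro s' l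
      by_cases h : (s', C) ∉ U
      · by_contra hc
        push_neg at hc
        exact h (winM_pre δ Base ⟨g l, fun x => (hc x).2⟩)
      · exact ⟨Classical.arbitrary X, fun h' => absurd h' h⟩
    choose bad bad_spec using hbad
    -- construct F
    let F : ℕ → S × List X := fun t => Nat.rec (s, ([] : List X))
      (fun _ p => (δ p.1 (g p.2) (bad p.1 p.2), p.2 ++ [bad p.1 p.2])) t
    have hF0 : F 0 = (s, []) := rfl
    have hFs : ∀ t, F (t + 1)
        = (δ (F t).1 (g (F t).2) (bad (F t).1 (F t).2),
           (F t).2 ++ [bad (F t).1 (F t).2]) := fun t => rfl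
    set ξ : ℕ → X := fun t => bad (F t).1 (F t).2 with hξ
    have hlist : ∀ t, (F t).2 = (List.range t).map ξ := by
      intro t
      induction t with
      | zero => simp [hF0]
      | succ t ih => rw [hFs, List.range_succ, List.map_append]; simp [ih, hξ]
    have hplay : ∀ t, (F t).1 = play δ g ξ s t := by
      intro t
      induction t with
      | zero => rfl
      | succ t ih =>
        calc (F (t + 1)).1 = δ (F t).1 (g (F t).2) (ξ t) := rfl
          _ = δ (play δ g ξ s t) (g ((List.range t).map ξ)) (ξ t) := by rw [ih, hlist]
          _ = play δ g ξ s (t + 1) := rfl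
    have hout : ∀ t, ((F t).1, C) ∉ U := by
      intro t
      induction t with
      | zero => exact hU
      | succ t ih => rw [hFs]; exact bad_spec _ _ ih
    obtain ⟨k, hk⟩ := hgood ξ
    exact hout k (by rw [hplay k]; exact Set.mem_iUnion.mpr ⟨0, hk⟩)
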